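/- Let $I \subset R = K[x_1,\ldots,x_n]$ be a square-free monomial ideal and $\mathfrak{p} \in \mathrm{Ass}(R/I^s) \setminus \mathrm{Min}(I)$ for some $s > 1$ with $x_i \in \mathfrak{p}$. Then $\mathfrak{p} \setminus x_i \notin \mathrm{Min}(I \setminus x_i)$, where $\setminus x_i$ denotes setting $x_i = 0$ in every minimal generator. -/

import Mathlib

open MvPolynomial

/-- A square-free monomial ideal: generated by square-free monomials. -/
def IsSqFreeMonomialIdeal {n : ℕ} {K : Type*} [Field K]
    (I : Ideal (MvPolynomial (Fin n) K)) : Prop :=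
  ∃ S : Set (Fin n →₀ ℕ), (∀ d ∈ S, ∀ i, d i ≤ 1) ∧
    I = Ideal.span ((fun d => (monomial d (1 : K) : MvPolynomial (Fin n) K)) '' S)

/-- The deletion map setting `x_i = 0` (and fixing the other variables). -/
noncomputable def delMap {n : ℕ} (K : Type*) [Field K] (i : Fin n) :
    MvPolynomial (Fin n) K →ₐ[K] MvPolynomial (Fin n) K :=
  MvPolynomial.aeval (fun j => if j = i then 0 else X j)

namespace Stmt15

variable {n : ℕ} {K : Type*} [Field K]

/-- monomial with coefficient 1 -/
noncomputable abbrev mon (d : Fin n →₀ ℕ) : MvPolynomial (Fin n) K := monomial d 1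

lemma mem_span_monomials_iff {T : Set (Fin n →₀ ℕ)} {f : MvPolynomial (Fin n) K} :
    f ∈ Ideal.span (mon '' T) ↔ ∀ d ∈ f.support, ∃ e ∈ T, e ≤ d := by
  classical
  constructor
  · intro hf
    refine Submodule.span_induction ?_ ?_ ?_ ?_ hf
    · rintro x ⟨e, he, rfl⟩ d hd
      rw [support_monomial, if_neg one_ne_zero, Finset.mem_singleton] at hd
      exact ⟨e, he, le_of_eq hd.symm⟩
    · intro d hd
      simp at hd
    · intro x y hx hy ihx ihy d hd
      rcases Finset.mem_union.1 (MvPolynomial.support_add hd) with h | h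
      · exact ihx d h
      · exact ihy d h
    · intro a x hx ih d hd
      rw [smul_eq_mul] at hd
      obtain ⟨b, hb, c, hc, rfl⟩ := Finset.mem_add.1 (MvPolynomial.support_mul _ _ hd)
      obtain ⟨e, he, hle⟩ := ih c hc
      exact ⟨e, he, hle.trans (le_add_self)⟩
  · intro h
    rw [MvPolynomial.as_sum f]
    refine Ideal.sum_mem _ fun d hd => ?_
    obtain ⟨e, he, hle⟩ := h d hd
    have : (monomial d (coeff d f) : MvPolynomial (Fin n) K)
        = mon e * monomial (d - e) (coeff d f) := by
      rw [mon, monomial_mul, one_mul, add_tsub_cancel_of_le hle]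
    rw [this]
    exact Ideal.mul_mem_right _ _ (Ideal.subset_span ⟨e, he, rfl⟩)

lemma aeval_sub_mem {J : Ideal (MvPolynomial (Fin n) K)} {g : Fin n → MvPolynomial (Fin n) K}
    (hg : ∀ j, g j - X j ∈ J) (f : MvPolynomial (Fin n) K) : aeval g f - f ∈ J := by
  induction f using MvPolynomial.induction_on with
  | C a => simp
  | add p q hp hq =>
      have : aeval g (p + q) - (p + q) = (aeval g p - p) + (aeval g q - q) := by
        rw [map_add]; ring
      rw [this]; exact J.add_mem hp hq
  | mul_X p j hp =>
      have : aeval g (p * X j) - p * X j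
          = (aeval g p - p) * g j + p * (g j - X j) := by
        rw [map_mul, aeval_X]; ring
      rw [this]
      exact J.add_mem (Ideal.mul_mem_right _ _ hp) (Ideal.mul_mem_left _ _ (hg j))

/-- ideal generated by a set of variables -/
noncomputable def varIdeal (V : Set (Fin n)) : Ideal (MvPolynomial (Fin n) K) :=
  Ideal.span ((fun j => (X j : MvPolynomial (Fin n) K)) '' V)

lemma varIdeal_eq_span_monomials (V : Set (Fin n)) :
    (varIdeal V : Ideal (MvPolynomial (Fin n) K))
      = Ideal.span (mon '' ((fun j => Finsupp.single j 1) '' V)) := by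
  rw [varIdeal, Set.image_image]
  rfl

lemma varIdeal_isPrime (V : Set (Fin n)) :
    (varIdeal V : Ideal (MvPolynomial (Fin n) K)).IsPrime := by
  classical
  have hker : (varIdeal V : Ideal (MvPolynomial (Fin n) K))
      = RingHom.ker ((aeval (fun j => if j ∈ V then 0 else X j)) : MvPolynomial (Fin n) K →ₐ[K] MvPolynomial (Fin n) K) := by
    apply le_antisymm
    · rw [varIdeal, Ideal.span_le]
      rintro _ ⟨j, hj, rfl⟩
      rw [SetLike.mem_coe, RingHom.mem_ker, aeval_X, if_pos hj]
    · intro f hf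
      rw [RingHom.mem_ker] at hf
      have hsub : aeval (fun j => if j ∈ V then 0 else X j) f - f ∈
          (varIdeal V : Ideal (MvPolynomial (Fin n) K)) := by
        apply aeval_sub_mem
        intro j
        by_cases hj : j ∈ V
        · rw [if_pos hj, zero_sub]
          exact neg_mem (Ideal.subset_span ⟨j, hj, rfl⟩)
        · rw [if_neg hj, sub_self]; exact zero_mem _
      have : f = -(aeval (fun j => if j ∈ V then 0 else X j) f - f) + 
          aeval (fun j => if j ∈ V then 0 else X j) f := by ring
      rw [this]
      exact add_mem (neg_mem hsub) (by rw [hf]; exact zero_mem _)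
  rw [hker]
  exact RingHom.ker_isPrime _

lemma X_mem_varIdeal_iff {V : Set (Fin n)} {j : Fin n} :
    (X j : MvPolynomial (Fin n) K) ∈ varIdeal V ↔ j ∈ V := by
  classical
  constructor
  · intro h
    rw [varIdeal_eq_span_monomials] at h
    have hX : (X j : MvPolynomial (Fin n) K) = mon (Finsupp.single j 1) := rfl
    rw [hX, mem_span_monomials_iff] at h
    obtain ⟨e, ⟨k, hk, rfl⟩, hle⟩ := h (Finsupp.single j 1) (by
      simp [mon, support_monomial])
    have h1 := hle k
    rw [Finsupp.single_apply, if_pos rfl] at h1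
    rw [Finsupp.single_apply] at h1
    by_cases hkj : j = k
    · rwa [hkj]
    · rw [if_neg hkj] at h1; omega
  · intro h
    exact Ideal.subset_span ⟨j, h, rfl⟩

lemma monomial_mem_varIdeal_iff {V : Set (Fin n)} {d : Fin n →₀ ℕ} :
    (mon d : MvPolynomial (Fin n) K) ∈ varIdeal V ↔ ∃ j ∈ V, d j ≠ 0 := by
  classical
  rw [varIdeal_eq_span_monomials, mem_span_monomials_iff]
  constructor
  · intro h
    obtain ⟨e, ⟨k, hk, rfl⟩, hle⟩ := h d (by simp [mon, support_monomial])
    refine ⟨k, hk, ?_⟩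
    have := hle k
    rw [Finsupp.single_apply, if_pos rfl] at this
    omega
  · rintro ⟨j, hj, hdj⟩ d' hd'
    rw [mon, support_monomial, if_neg one_ne_zero, Finset.mem_singleton] at hd'
    subst hd'
    refine ⟨Finsupp.single j 1, ⟨j, hj, rfl⟩, ?_⟩
    intro k
    rw [Finsupp.single_apply]
    by_cases hkj : j = k
    · subst hkj; rw [if_pos rfl]; omega
    · rw [if_neg hkj]; omega


lemma delMap_X (i j : Fin n) :
    delMap K i (X j) = if j = i then 0 else X j := by
  rw [delMap, aeval_X]

lemma sub_delMap_mem (i : Fin n) (f : MvPolynomial (Fin n) K) :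
    f - delMap K i f ∈ Ideal.span {(X i : MvPolynomial (Fin n) K)} := by
  have h : delMap K i f - f ∈ Ideal.span {(X i : MvPolynomial (Fin n) K)} := by
    apply aeval_sub_mem
    intro j
    by_cases hj : j = i
    · subst hj
      rw [if_pos rfl, zero_sub]
      exact neg_mem (Ideal.subset_span rfl)
    · rw [if_neg hj, sub_self]; exact zero_mem _
  have : f - delMap K i f = -(delMap K i f - f) := by ring
  rw [this]; exact neg_mem h

lemma map_del_varIdeal (i : Fin n) (V : Set (Fin n)) :
    Ideal.map (delMap K i) (varIdeal V : Ideal (MvPolynomial (Fin n) K))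
      = varIdeal (V \ {i}) := by
  classical
  rw [varIdeal, Ideal.map_span, Set.image_image]
  apply le_antisymm
  · rw [Ideal.span_le]
    rintro _ ⟨j, hj, rfl⟩
    show delMap K i (X j) ∈ _
    rw [delMap_X]
    by_cases hji : j = i
    · rw [if_pos hji]; exact zero_mem _
    · rw [if_neg hji]
      exact Ideal.subset_span ⟨j, ⟨hj, hji⟩, rfl⟩
  · rw [varIdeal, Ideal.span_le]
    rintro _ ⟨j, ⟨hj, hji⟩, rfl⟩
    have hji' : j ≠ i := hji
    show (X j : MvPolynomial (Fin n) K) ∈ _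
    have : (X j : MvPolynomial (Fin n) K) = delMap K i (X j) := by
      rw [delMap_X, if_neg hji']
    rw [this]
    exact Ideal.subset_span ⟨j, hj, rfl⟩

lemma p_eq_map_sup {p : Ideal (MvPolynomial (Fin n) K)} {i : Fin n}
    (hi : (X i : MvPolynomial (Fin n) K) ∈ p) :
    p = Ideal.map (delMap K i) p ⊔ Ideal.span {(X i : MvPolynomial (Fin n) K)} := by
  have hsp : Ideal.span {(X i : MvPolynomial (Fin n) K)} ≤ p := by
    rw [Ideal.span_le]; rintro _ rfl; exact hi
  apply le_antisymm
  · intro f hf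
    have : f = delMap K i f + (f - delMap K i f) := by ring
    rw [this]
    exact Submodule.add_mem_sup (Ideal.mem_map_of_mem _ hf) (sub_delMap_mem i f)
  · refine sup_le (Ideal.map_le_iff_le_comap.2 ?_) hsp
    intro g hg
    show delMap K i g ∈ p
    have : delMap K i g = g - (g - delMap K i g) := by ring
    rw [this]
    exact p.sub_mem hg (hsp (sub_delMap_mem i g))

lemma varIdeal_diff_sup {V : Set (Fin n)} {i : Fin n} (hiV : i ∈ V) :
    (varIdeal (V \ {i}) : Ideal (MvPolynomial (Fin n) K))
      ⊔ Ideal.span {(X i : MvPolynomial (Fin n) K)} = varIdeal V := by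
  classical
  rw [varIdeal, varIdeal, ← Ideal.span_union]
  congr 1
  ext f
  constructor
  · rintro (⟨j, ⟨hj, _⟩, rfl⟩ | rfl)
    · exact ⟨j, hj, rfl⟩
    · exact ⟨i, hiV, rfl⟩
  · rintro ⟨j, hj, rfl⟩
    by_cases hji : j = i
    · subst hji; exact Or.inr rfl
    · exact Or.inl ⟨j, ⟨hj, hji⟩, rfl⟩

lemma exists_mem_of_prod_mem {A : Type*} [CommRing A] {P : Ideal A} (hP : P.IsPrime)
    {ι : Type*} {t : Finset ι} {f : ι → A} (h : ∏ x ∈ t, f x ∈ P) :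
    ∃ x ∈ t, f x ∈ P := by
  classical
  induction t using Finset.induction with
  | empty =>
      rw [Finset.prod_empty] at h
      exact absurd (P.eq_top_iff_one.2 h) hP.ne_top
  | @insert a t' hx ih =>
      rw [Finset.prod_insert hx] at h
      rcases hP.mem_or_mem h with h1 | h2
      · exact ⟨a, Finset.mem_insert_self _ _, h1⟩
      · obtain ⟨x, hx', hfx⟩ := ih h2
        exact ⟨x, Finset.mem_insert_of_mem hx', hfx⟩

/-- minimal primes of a monomial ideal are generated by variables -/
lemma minimalPrime_eq_varIdeal {S : Set (Fin n →₀ ℕ)} {P : Ideal (MvPolynomial (Fin n) K)}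
    (hP : P ∈ (Ideal.span (mon '' S)).minimalPrimes) :
    ∃ V : Set (Fin n), P = varIdeal V := by
  classical
  refine ⟨{j | (X j : MvPolynomial (Fin n) K) ∈ P}, ?_⟩
  have h1 : (varIdeal {j | (X j : MvPolynomial (Fin n) K) ∈ P}
      : Ideal (MvPolynomial (Fin n) K)) ≤ P := by
    rw [varIdeal, Ideal.span_le]
    rintro _ ⟨j, hj, rfl⟩
    exact hj
  have h2 : (Ideal.span (mon '' S) : Ideal (MvPolynomial (Fin n) K)) ≤ varIdeal {j | (X j : MvPolynomial (Fin n) K) ∈ P} := by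
    rw [Ideal.span_le]
    rintro _ ⟨e, he, rfl⟩
    have hmem : (mon e : MvPolynomial (Fin n) K) ∈ P :=
      hP.1.2 (Ideal.subset_span ⟨e, he, rfl⟩)
    have heq : (mon e : MvPolynomial (Fin n) K)
        = ∏ j ∈ e.support, (X j : MvPolynomial (Fin n) K) ^ e j := by
      rw [mon, monomial_eq, C_1, one_mul]; rfl
    rw [heq] at hmem
    obtain ⟨j, hjs, hjP⟩ := exists_mem_of_prod_mem hP.1.1 hmem
    have hXj : (X j : MvPolynomial (Fin n) K) ∈ P := hP.1.1.mem_of_pow_mem _ hjP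
    rw [SetLike.mem_coe, monomial_mem_varIdeal_iff]
    exact ⟨j, hXj, Finsupp.mem_support_iff.1 hjs⟩
  exact le_antisymm (hP.2 ⟨varIdeal_isPrime _, h2⟩ h1) h1

/-- iterated sumsets -/
def sumSet (T : Set (Fin n →₀ ℕ)) : ℕ → Set (Fin n →₀ ℕ)
  | 0 => {0}
  | k+1 => Set.image2 (· + ·) (sumSet T k) T

lemma span_monomials_pow (T : Set (Fin n →₀ ℕ)) (s : ℕ) :
    (Ideal.span (mon '' T) : Ideal (MvPolynomial (Fin n) K)) ^ s
      = Ideal.span (mon '' sumSet T s) := by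
  induction s with
  | zero =>
      rw [pow_zero, sumSet]
      have : (mon '' ({0} : Set (Fin n →₀ ℕ)) : Set (MvPolynomial (Fin n) K)) = {1} := by
        rw [Set.image_singleton]
        congr 1
      rw [this, Ideal.span_singleton_one, Ideal.one_eq_top]
  | succ k ih =>
      rw [pow_succ, ih, Ideal.span_mul_span']
      congr 1
      rw [show sumSet T (k+1) = Set.image2 (· + ·) (sumSet T k) T from rfl]
      rw [← Set.image2_mul, Set.image2_image_left, Set.image2_image_right,
        Set.image_image2]
      have : (fun (a b : Fin n →₀ ℕ) => (mon a * mon b : MvPolynomial (Fin n) K))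
          = fun a b => mon (a + b) := by
        funext a b
        rw [show (mon a * mon b : MvPolynomial (Fin n) K) = mon (a+b) by
          rw [mon, mon, monomial_mul, one_mul]]
      rw [this]

lemma sumSet_apply_eq_zero {T : Set (Fin n →₀ ℕ)} {i : Fin n}
    (hT : ∀ d ∈ T, d i = 0) {s : ℕ} :
    ∀ e ∈ sumSet T s, e i = 0 := by
  induction s with
  | zero =>
      rintro e he
      rw [sumSet, Set.mem_singleton_iff] at he
      subst he; rfl
  | succ k ih =>
      rintro e he
      obtain ⟨a, ha, b, hb, rfl⟩ := he
      rw [Finsupp.add_apply, ih a ha, hT b hb]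

lemma colon_X {T : Set (Fin n →₀ ℕ)} {i : Fin n} (hT : ∀ e ∈ T, e i = 0)
    {f : MvPolynomial (Fin n) K}
    (h : (X i : MvPolynomial (Fin n) K) * f ∈ Ideal.span (mon '' T)) :
    f ∈ Ideal.span (mon '' T) := by
  rw [mem_span_monomials_iff] at h ⊢
  intro d hd
  have hd' : Finsupp.single i 1 + d ∈ ((X i : MvPolynomial (Fin n) K) * f).support := by
    rw [MvPolynomial.mem_support_iff, coeff_X_mul]
    exact MvPolynomial.mem_support_iff.1 hd
  obtain ⟨e, he, hle⟩ := h _ hd'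
  refine ⟨e, he, fun j => ?_⟩
  have h1 := hle j
  rw [Finsupp.add_apply, Finsupp.single_apply] at h1
  by_cases hj : j = i
  · subst hj; rw [hT e he]; omega
  · rwa [if_neg (fun hij => hj hij.symm), zero_add] at h1

lemma pow_le_pow_ideal {A : Type*} [CommRing A] {I J : Ideal A} (h : I ≤ J) (m : ℕ) :
    I ^ m ≤ J ^ m := by
  induction m with
  | zero => simp
  | succ k ih => rw [pow_succ, pow_succ]; exact Ideal.mul_mono ih h

lemma sqfree_monomial_mem_of_mem_radical {S : Set (Fin n →₀ ℕ)}
    (hsf : ∀ e ∈ S, ∀ j, e j ≤ 1) {d : Fin n →₀ ℕ}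
    (h : (mon d : MvPolynomial (Fin n) K) ∈ (Ideal.span (mon '' S)).radical) :
    (mon d : MvPolynomial (Fin n) K) ∈ Ideal.span (mon '' S) := by
  classical
  obtain ⟨m, hm⟩ := h
  rw [mon, monomial_pow, one_pow] at hm
  rw [mem_span_monomials_iff] at hm ⊢
  intro d' hd'
  rw [mon, support_monomial, if_neg one_ne_zero, Finset.mem_singleton] at hd'
  obtain ⟨e, he, hle⟩ := hm (m • d) (by
    rw [support_monomial, if_neg one_ne_zero]; exact Finset.mem_singleton_self _)
  refine ⟨e, he, ?_⟩
  rw [hd']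
  intro j
  have h1 := hsf e he j
  have h2 := hle j
  rw [Finsupp.smul_apply, smul_eq_mul] at h2
  by_cases hdj : d j = 0
  · rw [hdj] at h2 ⊢; omega
  · omega

lemma monomial_mul_prod_X {ι : Type*} (t : Finset ι) (g : ι → Fin n) (d : Fin n →₀ ℕ) :
    (mon d : MvPolynomial (Fin n) K) * ∏ x ∈ t, (X (g x) : MvPolynomial (Fin n) K)
      = mon (d + ∑ x ∈ t, Finsupp.single (g x) 1) := by
  classical
  induction t using Finset.induction with
  | empty => simp [mon]
  | @insert a t' hx ih =>
      rw [Finset.prod_insert hx, Finset.sum_insert hx]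
      have : (mon d : MvPolynomial (Fin n) K) * (X (g a) * ∏ x ∈ t', X (g x))
          = ((mon d : MvPolynomial (Fin n) K) * ∏ x ∈ t', X (g x)) * X (g a) := by ring
      rw [this, ih]
      have hX : (X (g a) : MvPolynomial (Fin n) K) = mon (Finsupp.single (g a) 1) := rfl
      rw [hX, mon, mon, monomial_mul, one_mul]
      exact congrArg (fun e => (monomial e (1 : K) : MvPolynomial (Fin n) K)) (by abel)

end Stmt15

open Stmt15

/-- If `𝔭 ∈ Ass(R/I^s) \ Min(I)` for some `s > 1` and `x_i ∈ 𝔭`, then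
`𝔭 \ x_i ∉ Min(I \ x_i)`, where `\ x_i` is the deletion obtained by setting `x_i = 0`. -/
theorem stmt15 {n : ℕ} {K : Type*} [Field K]
    (I : Ideal (MvPolynomial (Fin n) K)) (hI : IsSqFreeMonomialIdeal I)
    (s : ℕ) (hs : 1 < s)
    (p : Ideal (MvPolynomial (Fin n) K))
    (hAss : p ∈ associatedPrimes (MvPolynomial (Fin n) K)
      (MvPolynomial (Fin n) K ⧸ (I ^ s)))
    (hpmin : p ∉ I.minimalPrimes)
    (i : Fin n) (hi : (X i : MvPolynomial (Fin n) K) ∈ p) :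
    Ideal.map (delMap K i) p ∉ (Ideal.map (delMap K i) I).minimalPrimes := by
  classical
  intro hq'
  obtain ⟨S, hSsf, hIS⟩ := hI
  subst hIS
  obtain ⟨hp, x, hx⟩ := isAssociatedPrime_iff.1 hAss
  obtain ⟨f, rfl⟩ := Ideal.Quotient.mk_surjective x
  set I₀ : Ideal (MvPolynomial (Fin n) K) :=
    Ideal.span ((fun d => (monomial d (1 : K) : MvPolynomial (Fin n) K)) '' S) with hI₀
  have memp : ∀ r : MvPolynomial (Fin n) K, r ∈ p ↔ r * f ∈ I₀ ^ s := by
    intro r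
    rw [hx, Submodule.mem_colon_singleton, Submodule.mem_bot]
    have hsmul : r • (Ideal.Quotient.mk (I₀ ^ s) f) = Ideal.Quotient.mk (I₀ ^ s) (r * f) := rfl
    rw [hsmul, Ideal.Quotient.eq_zero_iff_mem]
  -- every minimal prime of I₀ contained in p avoids X i
  have hK3 : ∀ P, P ∈ I₀.minimalPrimes → P ≤ p →
      (X i : MvPolynomial (Fin n) K) ∉ P := by
    intro P hPmin hPle hXiP
    obtain ⟨V₀, hPV⟩ := minimalPrime_eq_varIdeal hPmin
    have hiV : i ∈ V₀ := X_mem_varIdeal_iff.1 (hPV ▸ hXiP)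
    have hM0 : Ideal.map (delMap K i) P = varIdeal (V₀ \ {i}) := by
      rw [hPV, map_del_varIdeal]
    have hle1 : Ideal.map (delMap K i) I₀ ≤ Ideal.map (delMap K i) P :=
      Ideal.map_mono hPmin.1.2
    have hle2 : Ideal.map (delMap K i) P ≤ Ideal.map (delMap K i) p :=
      Ideal.map_mono hPle
    have hq'le : Ideal.map (delMap K i) p ≤ Ideal.map (delMap K i) P :=
      hq'.2 ⟨hM0 ▸ varIdeal_isPrime _, hle1⟩ hle2
    have hpeq : p = P := by
      rw [p_eq_map_sup hi, le_antisymm hq'le hle2, hM0, varIdeal_diff_sup hiV, ← hPV]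
    exact hpmin (hpeq ▸ hPmin)
  -- the minimal primes not contained in p, and an element u outside p in all of them
  have hfin : {P : Ideal (MvPolynomial (Fin n) K) | P ∈ I₀.minimalPrimes ∧ ¬ P ≤ p}.Finite := by
    apply Set.Finite.subset (Set.finite_range
      (varIdeal : Set (Fin n) → Ideal (MvPolynomial (Fin n) K)))
    rintro P ⟨hP, -⟩
    obtain ⟨V, hV⟩ := minimalPrime_eq_varIdeal hP
    exact ⟨V, hV.symm⟩
  set t := hfin.toFinset with ht
  set jf : Ideal (MvPolynomial (Fin n) K) → Fin n := fun P =>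
    if h : ∃ j, (X j : MvPolynomial (Fin n) K) ∈ P ∧ (X j : MvPolynomial (Fin n) K) ∉ p
    then h.choose else i with hjf
  have hjP : ∀ P ∈ t, (X (jf P) : MvPolynomial (Fin n) K) ∈ P ∧
      (X (jf P) : MvPolynomial (Fin n) K) ∉ p := by
    intro P hPt
    rw [ht, Set.Finite.mem_toFinset] at hPt
    obtain ⟨hPmin, hnle⟩ := hPt
    have hex : ∃ j, (X j : MvPolynomial (Fin n) K) ∈ P ∧
        (X j : MvPolynomial (Fin n) K) ∉ p := by
      obtain ⟨V, hV⟩ := minimalPrime_eq_varIdeal hPmin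
      by_contra hno
      push_neg at hno
      apply hnle
      rw [hV, varIdeal, Ideal.span_le]
      rintro _ ⟨j, hj, rfl⟩
      exact hno j (hV ▸ Ideal.subset_span ⟨j, hj, rfl⟩)
    simp only [hjf, dif_pos hex]
    exact hex.choose_spec
  set u : MvPolynomial (Fin n) K := ∏ P ∈ t, (X (jf P) : MvPolynomial (Fin n) K) with hu
  have hu_notp : u ∉ p := Submonoid.prod_mem p.primeCompl (fun P hP => (hjP P hP).2)
  have hu_inP : ∀ P ∈ t, u ∈ P := by
    intro P hPt
    obtain ⟨c, hc⟩ := Finset.dvd_prod_of_mem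
      (fun P => (X (jf P) : MvPolynomial (Fin n) K)) hPt
    rw [hu, hc]
    exact Ideal.mul_mem_right _ _ (hjP P hPt).1
  -- the key auxiliary monomial ideal J
  set T : Set (Fin n →₀ ℕ) := {d | d i = 0 ∧ ∀ P ∈ I₀.minimalPrimes, P ≤ p →
    (mon d : MvPolynomial (Fin n) K) ∈ P} with hT
  set J : Ideal (MvPolynomial (Fin n) K) := Ideal.span (mon '' T) with hJ
  have hIJ : I₀ ≤ J := by
    rw [hI₀, Ideal.span_le]
    rintro _ ⟨e, he, rfl⟩
    rw [SetLike.mem_coe, hJ, mem_span_monomials_iff]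
    intro d hd
    have hde : d = e := by
      rw [support_monomial, if_neg one_ne_zero, Finset.mem_singleton] at hd
      exact hd
    subst hde
    refine ⟨Finsupp.erase i d, ⟨Finsupp.erase_same, ?_⟩, ?_⟩
    · intro P hPmin hPle
      obtain ⟨V, hV⟩ := minimalPrime_eq_varIdeal hPmin
      have hXiP : (X i : MvPolynomial (Fin n) K) ∉ P := hK3 P hPmin hPle
      have hiV : i ∉ V := fun hiV => hXiP (hV ▸ X_mem_varIdeal_iff.2 hiV)
      have hmemP : (mon d : MvPolynomial (Fin n) K) ∈ P :=
        hPmin.1.2 (Ideal.subset_span ⟨d, he, rfl⟩)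
      rw [hV, monomial_mem_varIdeal_iff] at hmemP ⊢
      obtain ⟨j, hjV, hej⟩ := hmemP
      have hji : j ≠ i := fun h => hiV (h ▸ hjV)
      exact ⟨j, hjV, by rw [Finsupp.erase_ne hji]; exact hej⟩
    · intro j
      by_cases hji : j = i
      · subst hji; rw [Finsupp.erase_same]; omega
      · rw [Finsupp.erase_ne hji]
  have hXif : (X i : MvPolynomial (Fin n) K) * f ∈ I₀ ^ s := (memp _).1 hi
  have hfJs : f ∈ Ideal.span (mon '' sumSet T s) := by
    refine colon_X (i := i) (sumSet_apply_eq_zero (fun d hd => hd.1)) ?_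
    have h1 : (X i : MvPolynomial (Fin n) K) * f ∈ J ^ s := pow_le_pow_ideal hIJ s hXif
    rwa [hJ, span_monomials_pow] at h1
  have hJu : ∀ g ∈ J, g * u ∈ I₀ := by
    intro g hg
    refine Submodule.span_induction (p := fun g _ => g * u ∈ I₀) ?_ ?_ ?_ ?_ hg
    · rintro _ ⟨d, hdT, rfl⟩
      rw [hu, monomial_mul_prod_X]
      apply sqfree_monomial_mem_of_mem_radical hSsf
      rw [← Ideal.sInf_minimalPrimes]
      rw [Ideal.mem_sInf]
      intro P hPmin
      by_cases hle : P ≤ p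
      · rw [← monomial_mul_prod_X]
        exact Ideal.mul_mem_right _ _ (hdT.2 P hPmin hle)
      · have hPt : P ∈ t := by
          rw [ht, Set.Finite.mem_toFinset]; exact ⟨hPmin, hle⟩
        rw [← monomial_mul_prod_X]
        exact Ideal.mul_mem_left _ _ (hu ▸ hu_inP P hPt)
    · show (0 : MvPolynomial (Fin n) K) * u ∈ I₀
      rw [zero_mul]; exact zero_mem _
    · intro a b _ _ iha ihb
      show (a + b) * u ∈ I₀
      rw [add_mul]; exact add_mem iha ihb
    · intro a b _ ihb
      show (a • b) * u ∈ I₀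
      rw [smul_eq_mul, mul_assoc]; exact Ideal.mul_mem_left _ _ ihb
  have hJuI : J * Ideal.span {u} ≤ I₀ := by
    rw [Ideal.mul_le]
    intro r hr w hw
    obtain ⟨c, rfl⟩ := Ideal.mem_span_singleton'.1 hw
    rw [show r * (c * u) = (r * u) * c by ring]
    exact Ideal.mul_mem_right _ _ (hJu r hr)
  have hfu : f * u ^ s ∈ I₀ ^ s := by
    have h1 : f * u ^ s ∈ J ^ s * (Ideal.span {u}) ^ s :=
      Ideal.mul_mem_mul
        (by rw [hJ, span_monomials_pow]; exact hfJs)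
        (Ideal.pow_mem_pow (Ideal.mem_span_singleton_self u) s)
    rw [← mul_pow] at h1
    exact pow_le_pow_ideal hJuI s h1
  have hus : u ^ s ∈ p := (memp _).2 (by rwa [mul_comm] at hfu)
  exact hu_notp (hp.mem_of_pow_mem s hus)
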